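/- Every injective object in the category of sheaves of pointed O_X-modules on a monoided space X is flabby. -/

import Mathlib

open CategoryTheory TopologicalSpace Opposite

universe u

variable (X : TopCat.{u}) (O : TopCat.Presheaf CommMonCat.{u} X)

/-- A sheaf of pointed `O_X`-modules on a monoided space `(X, O_X)`: a sheaf of pointed
sets together with an `O_X`-action which is compatible with restriction, where the
basepoints are stationary and preserved by restriction. -/
structure PtdOSheaf : Type (u + 1) where
  /-- the underlying presheaf of sets -/
  presheaf : TopCat.Presheaf (Type u) X
  isSheaf : presheaf.IsSheaf
  /-- the basepoint of each set of sections -/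
  pt : ∀ U : (Opens X)ᵒᵖ, presheaf.obj U
  pt_res : ∀ {U V : (Opens X)ᵒᵖ} (f : U ⟶ V), presheaf.map f (pt U) = pt V
  /-- the action of `O_X(U)` on `F(U)` -/
  smul : ∀ U : (Opens X)ᵒᵖ, (O.obj U) → presheaf.obj U → presheaf.obj U
  one_smul : ∀ (U) (s), smul U 1 s = s
  mul_smul : ∀ (U) (a b : O.obj U) (s), smul U (a * b) s = smul U a (smul U b s)
  smul_pt : ∀ (U) (a : O.obj U), smul U a (pt U) = pt U
  smul_res : ∀ {U V : (Opens X)ᵒᵖ} (f : U ⟶ V) (a : O.obj U) (s : presheaf.obj U),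
    presheaf.map f (smul U a s) = smul V (O.map f a) (presheaf.map f s)

variable {X O}

/-- Morphisms of sheaves of pointed `O_X`-modules: natural, equivariant,
basepoint-preserving. -/
@[ext]
structure PtdOSheafHom (F G : PtdOSheaf X O) where
  app : ∀ U : (Opens X)ᵒᵖ, F.presheaf.obj U → G.presheaf.obj U
  naturality : ∀ {U V : (Opens X)ᵒᵖ} (f : U ⟶ V) (s : F.presheaf.obj U),
    G.presheaf.map f (app U s) = app V (F.presheaf.map f s)
  map_pt : ∀ U, app U (F.pt U) = G.pt U
  map_smul : ∀ (U) (a : O.obj U) (s : F.presheaf.obj U),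
    app U (F.smul U a s) = G.smul U a (app U s)

/-- The category `Mod₀(X)` of sheaves of pointed `O_X`-modules. -/
instance : Category (PtdOSheaf X O) where
  Hom := PtdOSheafHom
  id F := ⟨fun _ => id, fun _ _ => rfl, fun _ => rfl, fun _ _ _ => rfl⟩
  comp f g := ⟨fun U => g.app U ∘ f.app U,
    fun h s => by simp [Function.comp, f.naturality, g.naturality],
    fun U => by simp [Function.comp, f.map_pt, g.map_pt],
    fun U a s => by simp [Function.comp, f.map_smul, g.map_smul]⟩
  id_comp f := PtdOSheafHom.ext rfl
  comp_id f := PtdOSheafHom.ext rfl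
  assoc f g h := PtdOSheafHom.ext rfl

namespace Stmt18

lemma hom_ext' {X : TopCat.{u}} {U V : (Opens X)ᵒᵖ} (f g : U ⟶ V) : f = g := by
  rw [← Quiver.Hom.op_unop f, ← Quiver.Hom.op_unop g]
  congr 1
  exact Subsingleton.elim _ _

lemma res_res {X : TopCat.{u}} (F : TopCat.Presheaf (Type u) X) {U V W : (Opens X)ᵒᵖ}
    (f : U ⟶ V) (g : V ⟶ W) (h : U ⟶ W) (s : F.obj U) :
    F.map g (F.map f s) = F.map h s := by
  rw [← FunctorToTypes.map_comp_apply, hom_ext' (f ≫ g) h]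

lemma map_congr {X : TopCat.{u}} (F : TopCat.Presheaf (Type u) X) {U V : (Opens X)ᵒᵖ}
    (f g : U ⟶ V) (s : F.obj U) : F.map f s = F.map g s := by
  rw [hom_ext' f g]

lemma map_self {X : TopCat.{u}} (F : TopCat.Presheaf (Type u) X) {U : (Opens X)ᵒᵖ}
    (f : U ⟶ U) (s : F.obj U) : F.map f s = s := by
  rw [hom_ext' f (𝟙 U), F.map_id]; rfl

lemma resO (f : U ⟶ V) (g : V ⟶ W) (h : U ⟶ W) (a : O.obj U) :
    O.map g (O.map f a) = O.map h a := by
  rw [show h = f ≫ g from hom_ext' _ _, O.map_comp]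
  rfl

lemma mapO_self (f : U ⟶ U) (a : O.obj U) : O.map f a = a := by
  rw [show f = 𝟙 U from hom_ext' _ _, O.map_id]
  rfl

variable (I : PtdOSheaf X O)

/-- A pre-germ at `x`: a section on some neighborhood of `x`. -/
structure PreGerm (x : X) : Type u where
  W : Opens X
  mem : x ∈ W
  s : I.presheaf.obj (op W)

/-- Two pre-germs are related if they agree on a smaller neighborhood. -/
def grel (x : X) (a b : PreGerm I x) : Prop :=
  ∃ (W : Opens X) (_ : x ∈ W) (h1 : W ≤ a.W) (h2 : W ≤ b.W),
    I.presheaf.map (homOfLE h1).op a.s = I.presheaf.map (homOfLE h2).op b.s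

/-- The stalk of `I` at `x`. -/
def Stalk (x : X) : Type u := Quot (grel I x)

def germ {x : X} (W : Opens X) (hx : x ∈ W) (s : I.presheaf.obj (op W)) : Stalk I x :=
  Quot.mk _ ⟨W, hx, s⟩

lemma germ_map {x : X} {U V : (Opens X)ᵒᵖ} (f : U ⟶ V) (hx : x ∈ V.unop)
    (s : I.presheaf.obj U) :
    germ I V.unop hx (I.presheaf.map f s) = germ I U.unop (leOfHom f.unop hx) s :=
  Quot.sound ⟨V.unop, hx, le_rfl, leOfHom f.unop, res_res I.presheaf f _ _ s⟩

lemma grel_equiv (x : X) : Equivalence (grel I x) where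
  refl a := ⟨a.W, a.mem, le_rfl, le_rfl, rfl⟩
  symm := by
    rintro a b ⟨W, hx, h1, h2, hab⟩
    exact ⟨W, hx, h2, h1, hab.symm⟩
  trans := by
    rintro a b c ⟨W₁, hx₁, h1a, h1b, e1⟩ ⟨W₂, hx₂, h2b, h2c, e2⟩
    refine ⟨W₁ ⊓ W₂, ⟨hx₁, hx₂⟩, inf_le_left.trans h1a, inf_le_right.trans h2c, ?_⟩
    have e1' := congrArg (I.presheaf.map (homOfLE (inf_le_left : W₁ ⊓ W₂ ≤ W₁)).op) e1
    have e2' := congrArg (I.presheaf.map (homOfLE (inf_le_right : W₁ ⊓ W₂ ≤ W₂)).op) e2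
    rw [res_res I.presheaf _ _ (homOfLE (inf_le_left.trans h1a : W₁ ⊓ W₂ ≤ a.W)).op a.s,
      res_res I.presheaf _ _ (homOfLE (inf_le_left.trans h1b : W₁ ⊓ W₂ ≤ b.W)).op b.s] at e1'
    rw [res_res I.presheaf _ _ (homOfLE (inf_le_left.trans h1b : W₁ ⊓ W₂ ≤ b.W)).op b.s,
      res_res I.presheaf _ _ (homOfLE (inf_le_right.trans h2c : W₁ ⊓ W₂ ≤ c.W)).op c.s] at e2'
    exact e1'.trans e2'

lemma germ_eq_elim {x : X} {W : Opens X} (hx : x ∈ W) {s t : I.presheaf.obj (op W)}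
    (h : germ I W hx s = germ I W hx t) :
    ∃ (W' : Opens X) (_ : x ∈ W') (hle : W' ≤ W),
      I.presheaf.map (homOfLE hle).op s = I.presheaf.map (homOfLE hle).op t := by
  have := ((grel_equiv I x).eqvGen_iff).mp (Quot.eq.mp h)
  obtain ⟨W', hx', h1, h2, e⟩ := this
  exact ⟨W', hx', h1, by rw [e]⟩

/-- Action of `O(W)` on the stalk at `x ∈ W`. -/
def smulStalk {x : X} (W : Opens X) (hx : x ∈ W) (a : O.obj (op W)) :
    Stalk I x → Stalk I x :=
  Quot.lift
    (fun p => germ I (W ⊓ p.W) ⟨hx, p.mem⟩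
      (I.smul (op (W ⊓ p.W)) (O.map (homOfLE (inf_le_left : W ⊓ p.W ≤ W)).op a)
        (I.presheaf.map (homOfLE (inf_le_right : W ⊓ p.W ≤ p.W)).op p.s)))
    (by
      rintro p q ⟨W₀, hx₀, h1, h2, hpq⟩
      apply Quot.sound
      refine ⟨W ⊓ W₀, ⟨hx, hx₀⟩, inf_le_inf_left W h1, inf_le_inf_left W h2, ?_⟩
      rw [I.smul_res, I.smul_res]
      have ha : O.map (homOfLE (inf_le_inf_left W h1)).op
            (O.map (homOfLE (inf_le_left : W ⊓ p.W ≤ W)).op a)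
          = O.map (homOfLE (inf_le_inf_left W h2)).op
            (O.map (homOfLE (inf_le_left : W ⊓ q.W ≤ W)).op a) := by
        rw [resO _ _ (homOfLE (inf_le_left : W ⊓ W₀ ≤ W)).op a,
          resO _ _ (homOfLE (inf_le_left : W ⊓ W₀ ≤ W)).op a]
      have hs : I.presheaf.map (homOfLE (inf_le_inf_left W h1)).op
            (I.presheaf.map (homOfLE (inf_le_right : W ⊓ p.W ≤ p.W)).op p.s)
          = I.presheaf.map (homOfLE (inf_le_inf_left W h2)).op
            (I.presheaf.map (homOfLE (inf_le_right : W ⊓ q.W ≤ q.W)).op q.s) := by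
        rw [res_res I.presheaf _ _
              ((homOfLE h1).op ≫ (homOfLE (inf_le_right : W ⊓ W₀ ≤ W₀)).op) p.s,
          res_res I.presheaf _ _
              ((homOfLE h2).op ≫ (homOfLE (inf_le_right : W ⊓ W₀ ≤ W₀)).op) q.s,
          FunctorToTypes.map_comp_apply, FunctorToTypes.map_comp_apply, hpq]
      rw [ha, hs])

lemma smulStalk_germ' {x : X} (W : Opens X) (hx : x ∈ W) (a : O.obj (op W))
    {W' Wp : Opens X} (hx' : x ∈ W') (hxp : x ∈ Wp) (s : I.presheaf.obj (op Wp))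
    (hW : W' ≤ W) (hp : W' ≤ Wp) :
    smulStalk I W hx a (germ I Wp hxp s) =
      germ I W' hx' (I.smul (op W')
        (O.map (homOfLE hW).op a) (I.presheaf.map (homOfLE hp).op s)) := by
  apply Quot.sound
  refine ⟨W', hx', le_inf hW hp, le_rfl, ?_⟩
  rw [I.smul_res, I.smul_res,
    resO _ _ (homOfLE hW).op a, resO _ _ (homOfLE hW).op a,
    res_res I.presheaf _ _ (homOfLE hp).op s, res_res I.presheaf _ _ (homOfLE hp).op s]

lemma smulStalk_res {x : X} {W W' : Opens X} (h : W' ≤ W) (hx : x ∈ W')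
    (a : O.obj (op W)) (g : Stalk I x) :
    smulStalk I W (h hx) a g = smulStalk I W' hx (O.map (homOfLE h).op a) g := by
  induction g using Quot.ind with
  | _ p =>
    rw [show Quot.mk _ p = germ I p.W p.mem p.s from rfl,
      smulStalk_germ' I W (h hx) a (⟨hx, p.mem⟩ : x ∈ W' ⊓ p.W) p.mem p.s
        (inf_le_left.trans h) inf_le_right,
      smulStalk_germ' I W' hx _ (⟨hx, p.mem⟩ : x ∈ W' ⊓ p.W) p.mem p.s
        inf_le_left inf_le_right,
      resO _ _ (homOfLE (inf_le_left.trans h : W' ⊓ p.W ≤ W)).op a]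

/-- The Godement sheaf of `I`: sections over `W` are families of stalk elements. -/
def gpre : TopCat.Presheaf (Type u) X where
  obj W := ∀ x : X, x ∈ W.unop → Stalk I x
  map f := TypeCat.ofHom (fun g => fun x hx => g x (leOfHom f.unop hx))
  map_id _ := rfl
  map_comp _ _ := rfl

lemma gpre_isSheaf : (gpre I).IsSheaf := by
  rw [TopCat.Presheaf.isSheaf_iff_isSheafUniqueGluing_types]
  intro ι U sf hsf
  have mem : ∀ x, x ∈ iSup U → ∃ i, x ∈ U i := fun x hx => Opens.mem_iSup.mp hx
  refine ⟨fun x hx => sf (mem x hx).choose x (mem x hx).choose_spec, ?_, ?_⟩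
  · intro i
    funext x hx
    have hxs : x ∈ iSup U := Opens.mem_iSup.mpr ⟨i, hx⟩
    exact congrFun (congrFun (hsf (mem x hxs).choose i) x)
      ⟨(mem x hxs).choose_spec, hx⟩
  · intro t ht
    funext x hx
    exact congrFun (congrFun (ht (mem x hx).choose) x) (mem x hx).choose_spec

/-- The Godement sheaf as a pointed `O`-module. -/
def Godement : PtdOSheaf X O where
  presheaf := gpre I
  isSheaf := gpre_isSheaf I
  pt U := fun x hx => germ I U.unop hx (I.pt U)
  pt_res {U V} f := by
    funext x hx
    show germ I U.unop _ (I.pt U) = germ I V.unop hx (I.pt V)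
    rw [← I.pt_res f]
    exact (germ_map I f hx (I.pt U)).symm
  smul U a g := fun x hx => smulStalk I U.unop hx a (g x hx)
  one_smul U g := by
    funext x hx
    show smulStalk I U.unop hx 1 (g x hx) = g x hx
    induction g x hx using Quot.ind with
    | _ p =>
      show smulStalk I U.unop hx 1 (germ I p.W p.mem p.s) = germ I p.W p.mem p.s
      rw [smulStalk_germ' I U.unop hx 1 (⟨hx, p.mem⟩ : x ∈ U.unop ⊓ p.W) p.mem p.s
          inf_le_left inf_le_right,
        map_one, I.one_smul]
      exact germ_map I (homOfLE (inf_le_right : U.unop ⊓ p.W ≤ p.W)).op ⟨hx, p.mem⟩ p.s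
  mul_smul U a b g := by
    funext x hx
    show smulStalk I U.unop hx (a * b) (g x hx)
      = smulStalk I U.unop hx a (smulStalk I U.unop hx b (g x hx))
    induction g x hx using Quot.ind with
    | _ p =>
      show smulStalk I U.unop hx (a * b) (germ I p.W p.mem p.s)
        = smulStalk I U.unop hx a (smulStalk I U.unop hx b (germ I p.W p.mem p.s))
      rw [smulStalk_germ' I U.unop hx (a * b) (⟨hx, p.mem⟩ : x ∈ U.unop ⊓ p.W) p.mem p.s
          inf_le_left inf_le_right,
        smulStalk_germ' I U.unop hx b (⟨hx, p.mem⟩ : x ∈ U.unop ⊓ p.W) p.mem p.s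
          inf_le_left inf_le_right,
        smulStalk_germ' I U.unop hx a (⟨hx, p.mem⟩ : x ∈ U.unop ⊓ p.W)
          (⟨hx, p.mem⟩ : x ∈ U.unop ⊓ p.W) _ inf_le_left le_rfl,
        map_mul, I.mul_smul, map_self I.presheaf]
  smul_pt U a := by
    funext x hx
    show smulStalk I U.unop hx a (germ I U.unop hx (I.pt U)) = germ I U.unop hx (I.pt U)
    rw [smulStalk_germ' I U.unop hx a hx hx (I.pt U) le_rfl le_rfl,
      show I.presheaf.map (homOfLE (le_rfl : U.unop ≤ U.unop)).op (I.pt U) = I.pt U from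
        (I.pt_res _).trans (by rfl),
      I.smul_pt]
  smul_res {U V} f a g := by
    funext x hx
    show smulStalk I U.unop (leOfHom f.unop hx) a (g x (leOfHom f.unop hx))
      = smulStalk I V.unop hx (O.map f a) (g x (leOfHom f.unop hx))
    rw [smulStalk_res I (leOfHom f.unop) hx a,
      show O.map (homOfLE (leOfHom f.unop)).op a = O.map f a from
        congrArg (fun k => O.map k a) (hom_ext' _ _)]

/-- The canonical map from `I` to its Godement sheaf. -/
def toGodement : I ⟶ Godement I where
  app U s := fun x hx => germ I U.unop hx s
  naturality {U V} f s := by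
    funext x hx
    exact (germ_map I f hx s).symm
  map_pt U := rfl
  map_smul U a s := by
    funext x hx
    show germ I U.unop hx (I.smul U a s) = smulStalk I U.unop hx a (germ I U.unop hx s)
    rw [smulStalk_germ' I U.unop hx a hx hx s le_rfl le_rfl, map_self I.presheaf,
      show O.map (homOfLE (le_rfl : U.unop ≤ U.unop)).op a = a from mapO_self _ _]

lemma toGodement_app_injective (W : (Opens X)ᵒᵖ) :
    Function.Injective ((toGodement I).app W) := by
  intro s t h
  have key : ∀ x : X, x ∈ W.unop → ∃ (W' : Opens X) (_ : x ∈ W') (hle : W' ≤ W.unop),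
      I.presheaf.map (homOfLE hle).op s = I.presheaf.map (homOfLE hle).op t := by
    intro x hx
    exact germ_eq_elim I hx (congrFun (congrFun h x) hx)
  let ι := { x : X // x ∈ W.unop }
  let U : ι → Opens X := fun x => (key x.1 x.2).choose
  have hxU : ∀ x : ι, x.1 ∈ U x := fun x => (key x.1 x.2).choose_spec.choose
  have hle : ∀ x : ι, U x ≤ W.unop := fun x => (key x.1 x.2).choose_spec.choose_spec.choose
  have heq : ∀ x : ι, I.presheaf.map (homOfLE (hle x)).op s
      = I.presheaf.map (homOfLE (hle x)).op t :=
    fun x => (key x.1 x.2).choose_spec.choose_spec.choose_spec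
  let Ish : TopCat.Sheaf (Type u) X := ⟨I.presheaf, I.isSheaf⟩
  have : s = t := by
    apply TopCat.Sheaf.eq_of_locally_eq' Ish U W.unop (fun i => homOfLE (hle i))
      (fun x hx => Opens.mem_iSup.mpr ⟨⟨x, hx⟩, hxU ⟨x, hx⟩⟩)
    exact heq
  exact this

instance : Mono (toGodement I) := by
  constructor
  intro Z u v huv
  apply PtdOSheafHom.ext
  funext W s
  exact toGodement_app_injective I W
    (congrFun (congrFun (congrArg PtdOSheafHom.app huv) W) s)

end Stmt18

/-- Every injective object in the category of sheaves of pointed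
`O_X`-modules on a monoided space `X` is flabby. -/
theorem stmt18 (I : PtdOSheaf X O) (hI : Injective I) :
    ∀ (U V : Opens X) (h : V ≤ U),
      Function.Surjective (I.presheaf.map (homOfLE h).op) := by
  intro U V h s
  classical
  obtain ⟨r, hr⟩ := hI.factors (𝟙 I) (Stmt18.toGodement I)
  let F : (Stmt18.Godement I).presheaf.obj (op U) := fun x hx =>
    if hv : x ∈ V then Stmt18.germ I V hv s else Stmt18.germ I U hx (I.pt (op U))
  refine ⟨r.app (op U) F, ?_⟩
  rw [r.naturality (homOfLE h).op F]
  have hF : (Stmt18.Godement I).presheaf.map (homOfLE h).op F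
      = (Stmt18.toGodement I).app (op V) s := by
    funext x hx
    show F x (h hx) = Stmt18.germ I V hx s
    simp only [F, dif_pos hx]
  rw [hF]
  exact congrFun (congrFun (congrArg PtdOSheafHom.app hr) (op V)) s
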